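/- Let g = [[A, B], [C, D]] ∈ O(n,n|ℝ) and let θ be an n×n real skew-symmetric matrix such that Cθ + D is invertible. Then (Cθ + D)⁻¹·C is skew-symmetric. -/
import Mathlib


open Matrix

theorem stmt3 (n : ℕ) (A B C D θ : Matrix (Fin n) (Fin n) ℝ)
    (hg : (Matrix.fromBlocks A B C D)ᵀ * Matrix.fromBlocks 0 1 1 0 * Matrix.fromBlocks A B C D
      = Matrix.fromBlocks 0 1 1 0)
    (hθ : θᵀ = -θ) (hinv : IsUnit (C * θ + D)) :
    ((C * θ + D)⁻¹ * C)ᵀ = -((C * θ + D)⁻¹ * C) := by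
  set g := Matrix.fromBlocks A B C D with hgdef
  set J : Matrix (Fin n ⊕ Fin n) (Fin n ⊕ Fin n) ℝ := Matrix.fromBlocks 0 1 1 0 with hJdef
  have hJ2 : J * J = 1 := by
    rw [hJdef]
    simp [Matrix.fromBlocks_multiply, ← Matrix.fromBlocks_one]
  have h1 : (J * gᵀ * J) * g = 1 := by
    calc (J * gᵀ * J) * g = J * (gᵀ * J * g) := by noncomm_ring
    _ = J * J := by rw [hg]
    _ = 1 := hJ2
  have h2 : g * (J * gᵀ * J) = 1 := mul_eq_one_comm.mp h1
  have h3 : g * J * gᵀ = J := by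
    have := congrArg (· * J) h2
    simp only [one_mul] at this
    calc g * J * gᵀ = g * (J * gᵀ * J) * J := by
          simp only [mul_assoc, hJ2, mul_one]
    _ = 1 * J := by rw [h2]
    _ = J := one_mul J
  have hblocks : Matrix.fromBlocks (B * Aᵀ + A * Bᵀ) (B * Cᵀ + A * Dᵀ)
      (D * Aᵀ + C * Bᵀ) (D * Cᵀ + C * Dᵀ) = J := by
    rw [← h3, hgdef, hJdef, Matrix.fromBlocks_transpose, Matrix.fromBlocks_multiply,
      Matrix.fromBlocks_multiply]
    congr 1 <;> noncomm_ring
  have key : D * Cᵀ + C * Dᵀ = 0 := by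
    have := congrArg Matrix.toBlocks₂₂ hblocks
    simpa [hJdef, Matrix.toBlocks_fromBlocks₂₂] using this
  set E := C * θ + D with hE
  have hkey2 : E * Cᵀ + C * Eᵀ = 0 := by
    rw [hE, Matrix.transpose_add, Matrix.transpose_mul, hθ]
    calc (C * θ + D) * Cᵀ + C * (-θ * Cᵀ + Dᵀ)
        = D * Cᵀ + C * Dᵀ := by noncomm_ring
    _ = 0 := key
  have hdet : IsUnit E.det := (Matrix.isUnit_iff_isUnit_det E).mp hinv
  have hdetT : IsUnit Eᵀ.det := by rwa [Matrix.det_transpose]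
  have hCT : Cᵀ = -(E⁻¹ * C) * Eᵀ := by
    have h4 : E * Cᵀ = -(C * Eᵀ) := by linear_combination (norm := noncomm_ring) hkey2
    have := congrArg (E⁻¹ * ·) h4
    simp only [← mul_assoc, Matrix.nonsing_inv_mul E hdet, one_mul] at this
    rw [this]
    noncomm_ring
  rw [Matrix.transpose_mul, Matrix.transpose_nonsing_inv, hCT,
    Matrix.mul_nonsing_inv_cancel_right _ _ hdetT]
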